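/- Let I ⊂ ℝ be a bounded interval, V ∈ L^∞(I,ℝ), s ∈ ℝ with ess inf|V − s| ≥ ω > 0 and V − s of constant sign a.e. on I. If u ∈ H²∩H₀¹(I,ℂ) solves −u'' − λ₁u + i(V − s)u = f with f ∈ L²(I,ℂ), then ‖u‖_{L²} ≤ ‖f‖_{L²}/ω. -/

import Mathlib

open MeasureTheory
open scoped Real

theorem resolvent_constant_sign_bound
    (a b : ℝ) (hab : a < b) (V : ℝ → ℝ) (s ω : ℝ) (hω : 0 < ω)
    (hVmeas : Measurable V)
    (hlow : ∀ᵐ x ∂(volume.restrict (Set.Icc a b)), ω ≤ |V x - s|)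
    (hsign : (∀ᵐ x ∂(volume.restrict (Set.Icc a b)), 0 ≤ V x - s) ∨
             (∀ᵐ x ∂(volume.restrict (Set.Icc a b)), V x - s ≤ 0))
    (f u u' u'' : ℝ → ℂ)
    (hf : ContinuousOn f (Set.Icc a b))
    (hu' : ∀ x ∈ Set.Icc a b, HasDerivAt u (u' x) x)
    (hu'' : ∀ x ∈ Set.Icc a b, HasDerivAt u' (u'' x) x)
    (hu''c : ContinuousOn u'' (Set.Icc a b))
    (hua : u a = 0) (hub : u b = 0)
    (heq : ∀ x ∈ Set.Icc a b,
      -u'' x - ((π ^ 2 / (b - a) ^ 2 : ℝ) : ℂ) * u x +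
        Complex.I * ((V x - s : ℝ) : ℂ) * u x = f x) :
    Real.sqrt (∫ x in a..b, ‖u x‖ ^ 2) ≤ Real.sqrt (∫ x in a..b, ‖f x‖ ^ 2) / ω := by
  have hab' : a ≤ b := hab.le
  have hIcc : Set.uIcc a b = Set.Icc a b := Set.uIcc_of_le hab'
  set c : ℝ := π ^ 2 / (b - a) ^ 2 with hc
  -- continuity facts
  have hucont : ContinuousOn u (Set.Icc a b) := fun x hx =>
    (hu' x hx).continuousAt.continuousWithinAt
  have hu'cont : ContinuousOn u' (Set.Icc a b) := fun x hx =>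
    (hu'' x hx).continuousAt.continuousWithinAt
  have hconj : ∀ {g : ℝ → ℂ}, ContinuousOn g (Set.Icc a b) →
      ContinuousOn (fun x => (starRingEnd ℂ) (g x)) (Set.Icc a b) := fun hg =>
    Complex.continuous_conj.comp_continuousOn hg
  -- w = (V - s) * u on Icc, but given by a continuous formula
  set w : ℝ → ℂ := fun x => -Complex.I * (f x + u'' x + (c : ℂ) * u x) with hwdef
  have hwcont : ContinuousOn w (Set.Icc a b) := by
    apply ContinuousOn.mul continuousOn_const
    exact (hf.add hu''c).add (continuousOn_const.mul hucont)
  have hw : ∀ x ∈ Set.Icc a b, w x = ((V x - s : ℝ) : ℂ) * u x := by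
    intro x hx
    have h := heq x hx
    simp only [hwdef]
    linear_combination Complex.I * h - (((V x - s : ℝ) : ℂ) * u x) * Complex.I_mul_I
  set p : ℝ → ℝ := fun x => (w x * (starRingEnd ℂ) (u x)).re with hpdef
  have hpcont : ContinuousOn p (Set.Icc a b) :=
    Complex.continuous_re.comp_continuousOn (hwcont.mul (hconj hucont))
  have hp : ∀ x ∈ Set.Icc a b, p x = (V x - s) * ‖u x‖ ^ 2 := by
    intro x hx
    simp only [hpdef]
    rw [hw x hx]
    simp only [Complex.sq_norm, Complex.normSq_apply,
      Complex.mul_re, Complex.mul_im, Complex.conj_re, Complex.conj_im,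
      Complex.ofReal_re, Complex.ofReal_im]
    ring
  -- interval integrability from continuity
  have hII : ∀ {g : ℝ → ℝ}, ContinuousOn g (Set.Icc a b) →
      IntervalIntegrable g volume a b := fun hg =>
    (hIcc ▸ hg).intervalIntegrable
  have hIIC : ∀ {g : ℝ → ℂ}, ContinuousOn g (Set.Icc a b) →
      IntervalIntegrable g volume a b := fun hg =>
    (hIcc ▸ hg).intervalIntegrable
  -- Step A : integration by parts
  set g' : ℝ → ℂ := fun x =>
    u'' x * (starRingEnd ℂ) (u x) + u' x * (starRingEnd ℂ) (u' x) with hg'def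
  have hg'cont : ContinuousOn g' (Set.Icc a b) :=
    (hu''c.mul (hconj hucont)).add (hu'cont.mul (hconj hu'cont))
  have hFTC : (∫ x in a..b, g' x) = 0 := by
    have hderiv : ∀ x ∈ Set.uIcc a b,
        HasDerivAt (fun y => u' y * (starRingEnd ℂ) (u y)) (g' x) x := by
      rw [hIcc]
      intro x hx
      have h1 : HasDerivAt (fun y => (starRingEnd ℂ) (u y)) ((starRingEnd ℂ) (u' x)) x := by
        exact (hu' x hx).star
      exact (hu'' x hx).mul h1
    rw [intervalIntegral.integral_eq_sub_of_hasDerivAt hderiv (hIIC hg'cont)]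
    simp [hua, hub]
  have hAcont : ContinuousOn (fun x => (u'' x * (starRingEnd ℂ) (u x)).im) (Set.Icc a b) :=
    Complex.continuous_im.comp_continuousOn (hu''c.mul (hconj hucont))
  have hImu'' : (∫ x in a..b, (u'' x * (starRingEnd ℂ) (u x)).im) = 0 := by
    have h1 : (∫ x in a..b, (g' x).im) = 0 := by
      have := (Complex.imCLM).intervalIntegral_comp_comm (μ := volume) (a := a) (b := b)
        (hIIC hg'cont)
      simp only [Complex.imCLM_apply] at this
      rw [this, hFTC]
      simp
    rw [← h1]
    apply intervalIntegral.integral_congr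
    intro x _
    simp only [hg'def, Complex.add_im, Complex.mul_im, Complex.conj_re, Complex.conj_im]
    ring
  -- Step B : ∫ p = ∫ Im (f ū)
  have hkey : (∫ x in a..b, p x) = ∫ x in a..b, (f x * (starRingEnd ℂ) (u x)).im := by
    have hptwise : Set.EqOn (fun x => (f x * (starRingEnd ℂ) (u x)).im)
        (fun x => -(u'' x * (starRingEnd ℂ) (u x)).im + p x) (Set.uIcc a b) := by
      rw [hIcc]
      intro x hx
      have h := heq x hx
      have hwx := hw x hx
      simp only [hpdef]
      rw [hwx, ← h]
      simp only [Complex.add_im, Complex.sub_im, Complex.neg_im, Complex.mul_im,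
        Complex.mul_re, Complex.I_re, Complex.I_im, Complex.ofReal_re, Complex.ofReal_im,
        Complex.conj_re, Complex.conj_im, Complex.add_re, Complex.sub_re, Complex.neg_re]
      ring
    have hsplit : (∫ x in a..b, (-(u'' x * (starRingEnd ℂ) (u x)).im + p x)) =
        (∫ x in a..b, -(u'' x * (starRingEnd ℂ) (u x)).im) + ∫ x in a..b, p x :=
      intervalIntegral.integral_add (hII hAcont).neg (hII hpcont)
    have hneg : (∫ x in a..b, -(u'' x * (starRingEnd ℂ) (u x)).im) =
        -(∫ x in a..b, (u'' x * (starRingEnd ℂ) (u x)).im) :=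
      intervalIntegral.integral_neg
    rw [intervalIntegral.integral_congr hptwise, hsplit, hneg, hImu'']
    simp
  -- Step C : |∫ Im (f ū)| ≤ ∫ ‖f‖ ‖u‖
  have hfu_cont : ContinuousOn (fun x => ‖f x‖ * ‖u x‖) (Set.Icc a b) :=
    hf.norm.mul hucont.norm
  have hC : |∫ x in a..b, (f x * (starRingEnd ℂ) (u x)).im| ≤
      ∫ x in a..b, ‖f x‖ * ‖u x‖ := by
    refine le_trans (intervalIntegral.abs_integral_le_integral_abs hab') ?_
    apply intervalIntegral.integral_mono_on hab'
      (hII (Complex.continuous_im.comp_continuousOn (hf.mul (hconj hucont))).abs)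
      (hII hfu_cont)
    intro x _
    calc |(f x * (starRingEnd ℂ) (u x)).im| ≤ ‖f x * (starRingEnd ℂ) (u x)‖ :=
          Complex.abs_im_le_norm _
      _ = ‖f x‖ * ‖u x‖ := by rw [norm_mul]; simp
  -- Step D : ω ∫‖u‖² ≤ |∫ p|
  set P : ℝ := ∫ x in a..b, ‖u x‖ ^ 2 with hP
  have hu2cont : ContinuousOn (fun x => ‖u x‖ ^ 2) (Set.Icc a b) := hucont.norm.pow 2
  have hPnonneg : 0 ≤ P := intervalIntegral.integral_nonneg hab' (fun x _ => by positivity)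
  have haemem : ∀ᵐ x ∂(volume.restrict (Set.Icc a b)), x ∈ Set.Icc a b :=
    ae_restrict_mem measurableSet_Icc
  have hD : ω * P ≤ |∫ x in a..b, p x| := by
    rcases hsign with hpos | hneg
    · have hae : ∀ᵐ x ∂(volume.restrict (Set.Icc a b)),
          ω * ‖u x‖ ^ 2 ≤ p x := by
        filter_upwards [hlow, hpos, haemem] with x h1 h2 h3
        rw [hp x h3]
        have : ω ≤ V x - s := by rwa [abs_of_nonneg h2] at h1
        nlinarith [sq_nonneg ‖u x‖]
      have := intervalIntegral.integral_mono_ae_restrict hab'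
        ((hII hu2cont).const_mul ω) (hII hpcont) hae
      rw [intervalIntegral.integral_const_mul] at this
      exact le_trans this (le_abs_self _)
    · have hae : ∀ᵐ x ∂(volume.restrict (Set.Icc a b)),
          p x ≤ -(ω * ‖u x‖ ^ 2) := by
        filter_upwards [hlow, hneg, haemem] with x h1 h2 h3
        rw [hp x h3]
        have : V x - s ≤ -ω := by rw [abs_of_nonpos h2] at h1; linarith
        nlinarith [sq_nonneg ‖u x‖]
      have hint : IntervalIntegrable (fun x => -(ω * ‖u x‖ ^ 2)) volume a b :=
        ((hII hu2cont).const_mul ω).neg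
      have h1 := intervalIntegral.integral_mono_ae_restrict hab'
        (hII hpcont) hint hae
      have h2 : (∫ x in a..b, -(ω * ‖u x‖ ^ 2)) = -(ω * P) := by
        rw [intervalIntegral.integral_neg, intervalIntegral.integral_const_mul]
      rw [h2] at h1
      have h3 : ω * P ≤ -(∫ x in a..b, p x) := by linarith
      exact le_trans h3 (neg_le_abs _)
  -- Step E : AM-GM bound on ∫ ‖f‖ ‖u‖
  set Q : ℝ := ∫ x in a..b, ‖f x‖ ^ 2 with hQ
  have hf2cont : ContinuousOn (fun x => ‖f x‖ ^ 2) (Set.Icc a b) := hf.norm.pow 2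
  have hQnonneg : 0 ≤ Q := intervalIntegral.integral_nonneg hab' (fun x _ => by positivity)
  have hE : (∫ x in a..b, ‖f x‖ * ‖u x‖) ≤ (Q / ω + ω * P) / 2 := by
    have hmono : (∫ x in a..b, ‖f x‖ * ‖u x‖) ≤
        ∫ x in a..b, (‖f x‖ ^ 2 / ω + ω * ‖u x‖ ^ 2) / 2 := by
      apply intervalIntegral.integral_mono_on hab' (hII hfu_cont)
        (hII (((hf2cont.div_const ω).add (continuousOn_const.mul hu2cont)).div_const 2))
      intro x _
      rw [le_div_iff₀ (by norm_num : (0:ℝ) < 2), ← sub_nonneg]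
      have h3 : ‖f x‖ ^ 2 / ω + ω * ‖u x‖ ^ 2 - ‖f x‖ * ‖u x‖ * 2 =
          (‖f x‖ - ω * ‖u x‖) ^ 2 / ω := by
        field_simp
        ring
      change 0 ≤ ‖f x‖ ^ 2 / ω + ω * ‖u x‖ ^ 2 - ‖f x‖ * ‖u x‖ * 2
      rw [h3]
      positivity
    refine le_trans hmono (le_of_eq ?_)
    rw [intervalIntegral.integral_div,
      intervalIntegral.integral_add ((hII hf2cont).div_const ω)
        ((hII hu2cont).const_mul ω),
      intervalIntegral.integral_div, intervalIntegral.integral_const_mul]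
  -- combine
  have hfinal : ω ^ 2 * P ≤ Q := by
    have h1 : ω * P ≤ (Q / ω + ω * P) / 2 := le_trans hD (le_trans (hkey ▸ hC) hE)
    have h2 : ω * (ω * P) ≤ ω * ((Q / ω + ω * P) / 2) :=
      mul_le_mul_of_nonneg_left h1 hω.le
    have h3 : ω * (Q / ω) = Q := by field_simp
    nlinarith
  have hsq : Real.sqrt (ω ^ 2 * P) ≤ Real.sqrt Q := Real.sqrt_le_sqrt hfinal
  rw [Real.sqrt_mul (sq_nonneg ω), Real.sqrt_sq hω.le] at hsq
  rw [le_div_iff₀ hω]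
  linarith [hsq]
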